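/- (Informative outliers certify correctness, geometric core of Lemma 1) Let $U$ be a distribution on the sphere $S = \{x \in \mathbb{R}^d : \|x - \mu\|_2 = \sigma_o\sqrt{d}\}$ whose density is at least $\eta > 0$ times that of the uniform distribution on $S$. Fix $B > 0$ and $t > 0$ with $\sigma_o^2 d - B^2 \le t^2$. Then for any point $p \in \mathbb{R}^d$ with $\|p - \mu\|_2 \ge B$, the probability that a sample $\tilde{x} \sim U$ satisfies $\|\tilde{x} - p\|_2 < t$ is at least $\eta \cdot \frac{A_d(1 - \|p-\mu\|_2/(\sigma_o\sqrt{d}))}{A_d}$, where $A_d(v)$ is the area of the spherical cap of the unit hypersphere in $\mathbb{R}^d$ with height $v$ and $A_d$ is the total sphere area. -/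

import Mathlib

open MeasureTheory
open scoped RealInnerProductSpace ENNReal


private lemma quad_aux {b α β k1 k2 k3 : ℝ} (hb : 0 < b)
    (h12 : k1 ≠ k2) (h13 : k1 ≠ k3) (h23 : k2 ≠ k3)
    (e1 : α + k1 * β = b * Real.sqrt (1 + k1 ^ 2))
    (e2 : α + k2 * β = b * Real.sqrt (1 + k2 ^ 2))
    (e3 : α + k3 * β = b * Real.sqrt (1 + k3 ^ 2)) : False := by
  have s1 : (α + k1 * β) ^ 2 = b ^ 2 * (1 + k1 ^ 2) := by
    rw [e1, mul_pow, Real.sq_sqrt (by positivity)]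
  have s2 : (α + k2 * β) ^ 2 = b ^ 2 * (1 + k2 ^ 2) := by
    rw [e2, mul_pow, Real.sq_sqrt (by positivity)]
  have s3 : (α + k3 * β) ^ 2 = b ^ 2 * (1 + k3 ^ 2) := by
    rw [e3, mul_pow, Real.sq_sqrt (by positivity)]
  have q1 : (β ^ 2 - b ^ 2) * k1 ^ 2 + (2 * α * β) * k1 + (α ^ 2 - b ^ 2) = 0 := by
    linear_combination s1
  have q2 : (β ^ 2 - b ^ 2) * k2 ^ 2 + (2 * α * β) * k2 + (α ^ 2 - b ^ 2) = 0 := by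
    linear_combination s2
  have q3 : (β ^ 2 - b ^ 2) * k3 ^ 2 + (2 * α * β) * k3 + (α ^ 2 - b ^ 2) = 0 := by
    linear_combination s3
  have h12' : (β ^ 2 - b ^ 2) * (k1 + k2) + 2 * α * β = 0 := by
    have h : (k1 - k2) * ((β ^ 2 - b ^ 2) * (k1 + k2) + 2 * α * β) = 0 := by
      linear_combination q1 - q2
    rcases mul_eq_zero.1 h with h | h
    · exact absurd (sub_eq_zero.1 h) h12
    · exact h
  have h13' : (β ^ 2 - b ^ 2) * (k1 + k3) + 2 * α * β = 0 := by
    have h : (k1 - k3) * ((β ^ 2 - b ^ 2) * (k1 + k3) + 2 * α * β) = 0 := by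
      linear_combination q1 - q3
    rcases mul_eq_zero.1 h with h | h
    · exact absurd (sub_eq_zero.1 h) h13
    · exact h
  have hA : β ^ 2 - b ^ 2 = 0 := by
    have h : (k2 - k3) * (β ^ 2 - b ^ 2) = 0 := by linear_combination h12' - h13'
    rcases mul_eq_zero.1 h with h | h
    · exact absurd (sub_eq_zero.1 h) h23
    · exact h
  have hBc : 2 * α * β = 0 := by linear_combination h12' - (k1 + k2) * hA
  have hC : α ^ 2 - b ^ 2 = 0 := by linear_combination q1 - k1 ^ 2 * hA - k1 * hBc
  have hαβ : α * β = 0 := by linarith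
  rcases mul_eq_zero.1 hαβ with h | h <;> nlinarith

private lemma slice_measure_zero {d : ℕ} (hd2 : 2 ≤ d) (μc : EuclideanSpace ℝ (Fin d))
    (μU : Measure (EuclideanSpace ℝ (Fin d))) [IsProbabilityMeasure μU]
    (hμUunif : ∀ O : EuclideanSpace ℝ (Fin d) ≃ₗᵢ[ℝ] EuclideanSpace ℝ (Fin d),
      Measure.map (fun x => μc + O (x - μc)) μU = μU)
    (e : EuclideanSpace ℝ (Fin d)) (he : ‖e‖ = 1) {b : ℝ} (hb : 0 < b) :
    μU {x | ⟪x - μc, e⟫ = b} = 0 := by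
  classical
  have he0 : e ≠ 0 := by intro h; rw [h, norm_zero] at he; norm_num at he
  -- find a unit vector orthogonal to e
  obtain ⟨g, hg_mem, hg_ne⟩ : ∃ g ∈ (ℝ ∙ e)ᗮ, g ≠ 0 := by
    rw [← Submodule.ne_bot_iff]
    intro hbot
    have htop : (ℝ ∙ e) = ⊤ := Submodule.orthogonal_eq_bot_iff.1 hbot
    have h1 : Module.finrank ℝ (ℝ ∙ e) = 1 := finrank_span_singleton he0
    have h2 : Module.finrank ℝ (EuclideanSpace ℝ (Fin d)) = d := by
      simp [finrank_euclideanSpace]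
    rw [htop, finrank_top, h2] at h1
    omega
  set f : EuclideanSpace ℝ (Fin d) := ‖g‖⁻¹ • g with hf
  have hgnorm : ‖g‖ ≠ 0 := norm_ne_zero_iff.2 hg_ne
  have hfnorm : ‖f‖ = 1 := by
    rw [hf, norm_smul, norm_inv, norm_norm, inv_mul_cancel₀ hgnorm]
  have hef : ⟪e, f⟫ = 0 := by
    have := (Submodule.mem_orthogonal _ _).1 hg_mem e (Submodule.mem_span_singleton_self e)
    rw [hf, real_inner_smul_right, this, mul_zero]
  set un : ℕ → EuclideanSpace ℝ (Fin d) :=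
    fun k => (Real.sqrt (1 + (k : ℝ) ^ 2))⁻¹ • (e + (k : ℝ) • f) with hun
  have hsqrt_pos : ∀ k : ℕ, 0 < Real.sqrt (1 + (k : ℝ) ^ 2) := fun k =>
    Real.sqrt_pos.2 (by positivity)
  have hnorm_sum : ∀ k : ℕ, ‖e + (k : ℝ) • f‖ = Real.sqrt (1 + (k : ℝ) ^ 2) := by
    intro k
    have h1 : ‖e + (k : ℝ) • f‖ ^ 2 = 1 + (k : ℝ) ^ 2 := by
      rw [norm_add_sq_real, real_inner_smul_right, hef, norm_smul, he, hfnorm]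
      simp [mul_pow, sq_abs]
    rw [← Real.sqrt_sq (norm_nonneg _), h1]
  have hu_norm : ∀ k : ℕ, ‖un k‖ = 1 := by
    intro k
    rw [hun, norm_smul, norm_inv, Real.norm_eq_abs, abs_of_pos (hsqrt_pos k), hnorm_sum k,
      inv_mul_cancel₀ (ne_of_gt (hsqrt_pos k))]
  set S : ℕ → Set (EuclideanSpace ℝ (Fin d)) := fun k => {x | ⟪x - μc, un k⟫ = b} with hS
  have hmeas : ∀ k, MeasurableSet (S k) := by
    intro k
    have hc : Continuous fun x : EuclideanSpace ℝ (Fin d) => ⟪x - μc, un k⟫ :=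
      Continuous.inner (continuous_id.sub continuous_const) continuous_const
    exact (isClosed_eq hc continuous_const).measurableSet
  have hSkey : ∀ k, μU (S k) = μU (S 0) := by
    intro k
    set O := Submodule.reflection (ℝ ∙ (un 0 - un k))ᗮ with hO
    have hOe : O (un 0) = un k := Submodule.reflection_sub (by rw [hu_norm, hu_norm])
    have hTmeas : Measurable fun x => μc + O (x - μc) :=
      (continuous_const.add (O.continuous.comp (continuous_id.sub continuous_const))).measurable
    calc μU (S k) = Measure.map (fun x => μc + O (x - μc)) μU (S k) := by rw [hμUunif O]
      _ = μU ((fun x => μc + O (x - μc)) ⁻¹' S k) := Measure.map_apply hTmeas (hmeas k)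
      _ = μU (S 0) := by
          congr 1
          ext x
          simp only [Set.mem_preimage, hS, Set.mem_setOf_eq, add_sub_cancel_left]
          rw [← hOe, O.inner_map_map]
  have hconv : ∀ (x) (k : ℕ), x ∈ S k →
      ⟪x - μc, e⟫ + (k : ℝ) * ⟪x - μc, f⟫ = b * Real.sqrt (1 + (k : ℝ) ^ 2) := by
    intro x k hk
    have h1 : ⟪x - μc, un k⟫ =
        (Real.sqrt (1 + (k : ℝ) ^ 2))⁻¹ * (⟪x - μc, e⟫ + (k : ℝ) * ⟪x - μc, f⟫) := by
      rw [hun]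
      simp only [real_inner_smul_right, inner_add_right]
    have hk' : (Real.sqrt (1 + (k : ℝ) ^ 2))⁻¹ *
        (⟪x - μc, e⟫ + (k : ℝ) * ⟪x - μc, f⟫) = b := by rw [← h1]; exact hk
    have hs := ne_of_gt (hsqrt_pos k)
    have h2 : Real.sqrt (1 + (k : ℝ) ^ 2) * ((Real.sqrt (1 + (k : ℝ) ^ 2))⁻¹ *
        (⟪x - μc, e⟫ + (k : ℝ) * ⟪x - μc, f⟫)) = Real.sqrt (1 + (k : ℝ) ^ 2) * b := by
      rw [hk']
    rw [← mul_assoc, mul_inv_cancel₀ hs, one_mul] at h2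
    linarith [h2]
  have hcard : ∀ (x) (n : ℕ), ((Finset.range n).filter fun k => x ∈ S k).card ≤ 2 := by
    intro x n
    by_contra h
    push_neg at h
    obtain ⟨a, b', c, ha, hb', hc, hab, hac, hbc⟩ := Finset.two_lt_card_iff.1 h
    have ha' := hconv x a (Finset.mem_filter.1 ha).2
    have hb'' := hconv x b' (Finset.mem_filter.1 hb').2
    have hc' := hconv x c (Finset.mem_filter.1 hc).2
    exact quad_aux hb (by exact_mod_cast hab) (by exact_mod_cast hac)
      (by exact_mod_cast hbc) ha' hb'' hc'
  have hsum : ∀ n : ℕ, (n : ℝ≥0∞) * μU (S 0) ≤ 2 := by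
    intro n
    have hstep : (n : ℝ≥0∞) * μU (S 0) = ∑ k ∈ Finset.range n, μU (S k) := by
      rw [Finset.sum_congr rfl fun k _ => hSkey k]
      simp [Finset.sum_const, nsmul_eq_mul]
    rw [hstep]
    have h1 : ∑ k ∈ Finset.range n, μU (S k)
        = ∫⁻ x, ∑ k ∈ Finset.range n, (S k).indicator (fun _ => (1 : ℝ≥0∞)) x ∂μU := by
      rw [lintegral_finset_sum _ fun k _ => measurable_const.indicator (hmeas k)]
      exact Finset.sum_congr rfl fun k _ => (lintegral_indicator_one (hmeas k)).symm
    rw [h1]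
    calc ∫⁻ x, ∑ k ∈ Finset.range n, (S k).indicator (fun _ => (1 : ℝ≥0∞)) x ∂μU
        ≤ ∫⁻ _, (2 : ℝ≥0∞) ∂μU := by
          apply lintegral_mono
          intro x
          dsimp only
          have heq : ∑ k ∈ Finset.range n, (S k).indicator (fun _ => (1 : ℝ≥0∞)) x
              = (((Finset.range n).filter fun k => x ∈ S k).card : ℝ≥0∞) := by
            simp [Set.indicator_apply, Finset.sum_boole]
          rw [heq]
          exact_mod_cast (by exact_mod_cast hcard x n : (((Finset.range n).filter
            fun k => x ∈ S k).card : ℝ≥0∞) ≤ ((2 : ℕ) : ℝ≥0∞))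
      _ = 2 := by rw [lintegral_const, measure_univ, mul_one]
  have hS0 : {x | ⟪x - μc, e⟫ = b} = S 0 := by
    have : un 0 = e := by
      rw [hun]; simp [Real.sqrt_one]
    rw [hS]; simp [this]
  rw [hS0]
  by_contra hne
  have hmtop : μU (S 0) ≠ ⊤ := measure_ne_top μU _
  obtain ⟨n, hn⟩ := ENNReal.exists_nat_gt (show (2:ℝ≥0∞)/μU (S 0) < ⊤ from ENNReal.div_lt_top (by norm_num) hne).ne
  have h2 : (2 : ℝ≥0∞) < n * μU (S 0) := by
    rw [ENNReal.div_lt_iff (Or.inl hne) (Or.inl hmtop)] at hn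
    exact hn
  exact absurd (hsum n) (not_le.2 h2)
/-- informative outliers certify correctness. If `U` has density at
least `η` times the uniform measure `μU` on the sphere of radius `σo√d` around
`μc`, `σo²d - B² ≤ t²` and `‖p - μc‖ ≥ B`, then the `U`-probability of the open
ball of radius `t` around `p` is at least `η` times the uniform measure of the
spherical cap `{x : ⟪x - μc, p - μc⟫ ≥ ‖p - μc‖²}` (the cap of height
`1 - ‖p-μc‖/(σo√d)`). -/
theorem informative_outliers_cap_bound
    (d : ℕ) (μc p : EuclideanSpace ℝ (Fin d)) (σo η B t : ℝ)
    (U μU : Measure (EuclideanSpace ℝ (Fin d)))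
    (hd : 0 < d) (hσo : 0 < σo) (hη : 0 < η) (hB : 0 < B) (ht : 0 < t)
    [IsProbabilityMeasure U] [IsProbabilityMeasure μU]
    (hUsphere : ∀ᵐ x ∂U, ‖x - μc‖ = σo * Real.sqrt d)
    (hμUsphere : ∀ᵐ x ∂μU, ‖x - μc‖ = σo * Real.sqrt d)
    (hμUunif : ∀ O : EuclideanSpace ℝ (Fin d) ≃ₗᵢ[ℝ] EuclideanSpace ℝ (Fin d),
      Measure.map (fun x => μc + O (x - μc)) μU = μU)
    (hdens : ∀ A : Set (EuclideanSpace ℝ (Fin d)), MeasurableSet A →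
      ENNReal.ofReal η * μU A ≤ U A)
    (htB : σo ^ 2 * d - B ^ 2 ≤ t ^ 2) (hpB : B ≤ ‖p - μc‖) :
    ENNReal.ofReal η * μU {x | ‖p - μc‖ ^ 2 ≤ ⟪x - μc, p - μc⟫} ≤
      U {x | ‖x - p‖ < t} := by
  classical
  set Δ : EuclideanSpace ℝ (Fin d) := p - μc with hΔ
  set b : ℝ := ‖Δ‖ with hbdef
  have hb0 : 0 < b := lt_of_lt_of_le hB hpB
  set r : ℝ := σo * Real.sqrt d with hrdef
  have hr0 : 0 < r := mul_pos hσo (Real.sqrt_pos.2 (by exact_mod_cast hd))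
  have hr2 : r ^ 2 = σo ^ 2 * d := by
    rw [hrdef, mul_pow, Real.sq_sqrt (Nat.cast_nonneg d)]
  have hrbt : r ^ 2 - b ^ 2 ≤ t ^ 2 := by
    have : B ^ 2 ≤ b ^ 2 := by nlinarith
    rw [hr2]; linarith
  set Cap : Set (EuclideanSpace ℝ (Fin d)) := {x | ‖p - μc‖ ^ 2 ≤ ⟪x - μc, p - μc⟫} with hCap
  set Good : Set (EuclideanSpace ℝ (Fin d)) := {x | ‖x - μc‖ = r} with hGood
  set Ball : Set (EuclideanSpace ℝ (Fin d)) := {x | ‖x - p‖ < t} with hBall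
  have hGoodc : μU Goodᶜ = 0 := by
    have := hμUsphere
    rw [ae_iff] at this
    exact this
  have hμcap : μU Cap ≤ μU (Cap ∩ Good) := by
    have hsub : Cap ⊆ (Cap ∩ Good) ∪ Goodᶜ := by
      intro x hx
      by_cases h : x ∈ Good
      · exact Or.inl ⟨hx, h⟩
      · exact Or.inr h
    calc μU Cap ≤ μU ((Cap ∩ Good) ∪ Goodᶜ) := measure_mono hsub
      _ ≤ μU (Cap ∩ Good) + μU Goodᶜ := measure_union_le _ _
      _ = μU (Cap ∩ Good) := by rw [hGoodc, add_zero]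
  -- geometric identity
  have hxp : ∀ x : EuclideanSpace ℝ (Fin d), x ∈ Good → ‖x - p‖ ^ 2 = r ^ 2 + b ^ 2 - 2 * ⟪x - μc, Δ⟫ := by
    intro x hx
    have hxe : x - p = (x - μc) - Δ := by rw [hΔ]; abel
    have hgx : ‖x - μc‖ = r := hx
    rw [hxe, norm_sub_sq_real, hgx]
    ring
  have hball_of_sq : ∀ x : EuclideanSpace ℝ (Fin d), ‖x - p‖ ^ 2 < t ^ 2 → x ∈ Ball := by
    intro x hx
    exact lt_of_pow_lt_pow_left₀ 2 ht.le hx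
  have hCapGoodMeas : MeasurableSet (Cap ∩ Good) := by
    have h1 : MeasurableSet Cap := by
      have hc : Continuous fun x : EuclideanSpace ℝ (Fin d) => ⟪x - μc, p - μc⟫ :=
        Continuous.inner (continuous_id.sub continuous_const) continuous_const
      exact (isClosed_le continuous_const hc).measurableSet
    have h2 : MeasurableSet Good := by
      have hc : Continuous fun x : EuclideanSpace ℝ (Fin d) => ‖x - μc‖ :=
        (continuous_id.sub continuous_const).norm
      exact (isClosed_eq hc continuous_const).measurableSet
    exact h1.inter h2
  rcases lt_or_eq_of_le hrbt with hlt | heq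
  · -- non-degenerate case: Cap ∩ Good ⊆ Ball
    have hsubBall : Cap ∩ Good ⊆ Ball := by
      rintro x ⟨hx1, hx2⟩
      apply hball_of_sq
      have hcap' : b ^ 2 ≤ ⟪x - μc, Δ⟫ := hx1
      have := hxp x hx2
      nlinarith
    calc ENNReal.ofReal η * μU Cap ≤ ENNReal.ofReal η * μU (Cap ∩ Good) :=
          mul_le_mul_right hμcap _
      _ ≤ U (Cap ∩ Good) := hdens _ hCapGoodMeas
      _ ≤ U Ball := measure_mono hsubBall
  · -- degenerate case: r² - b² = t²; must exclude the slice
    set Slice : Set (EuclideanSpace ℝ (Fin d)) := {x | ⟪x - μc, Δ⟫ = b ^ 2} with hSlice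
    have hSliceMeas : MeasurableSet Slice := by
      have hc : Continuous fun x : EuclideanSpace ℝ (Fin d) => ⟪x - μc, Δ⟫ :=
        Continuous.inner (continuous_id.sub continuous_const) continuous_const
      exact (isClosed_eq hc continuous_const).measurableSet
    have hbr : b < r := by nlinarith
    have hslice0 : μU (Slice ∩ Good) = 0 := by
      rcases Nat.lt_or_ge d 2 with hd1 | hd2
      · -- d = 1 : the slice misses the sphere entirely
        have hd1' : d = 1 := by omega
        have hempty : Slice ∩ Good = ∅ := by
          ext x
          simp only [Set.mem_inter_iff, Set.mem_empty_iff_false, iff_false, not_and,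
            hSlice, hGood, Set.mem_setOf_eq]
          intro h1 h2
          subst hd1'
          set y : EuclideanSpace ℝ (Fin 1) := x - μc with hy
          have hinner : ⟪y, Δ⟫ = y 0 * Δ 0 := by
            simp [PiLp.inner_apply, Fin.sum_univ_one, RCLike.inner_apply, starRingEnd_apply]
            ring
          have hny : ‖y‖ = |y 0| := by
            rw [EuclideanSpace.norm_eq]
            simp [Real.sqrt_sq_eq_abs]
          have hnΔ : ‖Δ‖ = |Δ 0| := by
            rw [EuclideanSpace.norm_eq]
            simp [Real.sqrt_sq_eq_abs]
          have habs : |⟪y, Δ⟫| = r * b := by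
            rw [hinner, abs_mul, ← hny, ← hnΔ, h2, ← hbdef]
          rw [h1] at habs
          have : b ^ 2 = r * b := by
            rw [← habs]; exact (abs_of_pos (by positivity)).symm
          nlinarith
        rw [hempty]; exact measure_empty
      · -- d ≥ 2 : use rotation invariance
        have hsub : Slice ∩ Good ⊆ {x | ⟪x - μc, b⁻¹ • Δ⟫ = b} := by
          rintro x ⟨hx1, _⟩
          have : ⟪x - μc, Δ⟫ = b ^ 2 := hx1
          simp only [Set.mem_setOf_eq, real_inner_smul_right]
          rw [this]
          field_simp
        have he1 : ‖b⁻¹ • Δ‖ = 1 := by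
          rw [norm_smul, norm_inv, Real.norm_eq_abs, abs_of_pos hb0, ← hbdef,
            inv_mul_cancel₀ (ne_of_gt hb0)]
        exact measure_mono_null hsub
          (slice_measure_zero hd2 μc μU hμUunif (b⁻¹ • Δ) he1 hb0)
    -- A := (Cap ∩ Good) \ Slice lands in the open ball
    set A : Set (EuclideanSpace ℝ (Fin d)) := (Cap ∩ Good) \ Slice with hA
    have hAmeas : MeasurableSet A := hCapGoodMeas.diff hSliceMeas
    have hAsub : A ⊆ Ball := by
      rintro x ⟨⟨hx1, hx2⟩, hx3⟩
      apply hball_of_sq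
      have hcap' : b ^ 2 ≤ ⟪x - μc, Δ⟫ := hx1
      have hne : ⟪x - μc, Δ⟫ ≠ b ^ 2 := hx3
      have hstrict : b ^ 2 < ⟪x - μc, Δ⟫ := lt_of_le_of_ne hcap' (Ne.symm hne)
      have := hxp x hx2
      nlinarith
    have hμA : μU (Cap ∩ Good) ≤ μU A := by
      have hsub2 : Cap ∩ Good ⊆ A ∪ (Slice ∩ Good) := by
        rintro x ⟨hx1, hx2⟩
        by_cases h : x ∈ Slice
        · exact Or.inr ⟨h, hx2⟩
        · exact Or.inl ⟨⟨hx1, hx2⟩, h⟩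
      calc μU (Cap ∩ Good) ≤ μU (A ∪ (Slice ∩ Good)) := measure_mono hsub2
        _ ≤ μU A + μU (Slice ∩ Good) := measure_union_le _ _
        _ = μU A := by rw [hslice0, add_zero]
    calc ENNReal.ofReal η * μU Cap ≤ ENNReal.ofReal η * μU A :=
          mul_le_mul_right (le_trans hμcap hμA) _
      _ ≤ U A := hdens _ hAmeas
      _ ≤ U Ball := measure_mono hAsub
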